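/- Let ψ, φ : ℂ → ℂ be entire functions, let (fₙ) be a sequence of entire functions belonging to F² such that ψ·(fₙ∘φ) ∈ F² for every n, and let f, g ∈ F² be entire functions such that ∫_ℂ |fₙ(z) − f(z)|² e^{−|z|²} dV(z) → 0 and ∫_ℂ |ψ(z) fₙ(φ(z)) − g(z)|² e^{−|z|²} dV(z) → 0 as n → ∞. Then ψ(z) f(φ(z)) = g(z) for every z ∈ ℂ; in particular ψ·(f∘φ) ∈ F². (Hence every maximal weighted composition operator is closed on F².) -/

import Mathlib

open MeasureTheory Complex Filter Set Metric intervalIntegral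
open scoped Real

lemma circ_mvp (G : ℂ → ℂ) (hG : Differentiable ℂ G) (w : ℂ) {s : ℝ} (hs : 0 < s) :
    2 * Real.pi * ‖G w‖ ≤
      ∫ θ in (-Real.pi)..Real.pi, ‖G (circleMap w s θ)‖ := by
  have key := (hG.diffContOnCl (s := ball w s)).circleIntegral_sub_inv_smul
    (mem_ball_self hs)
  have h1 : (∮ z in C(w, s), (z - w)⁻¹ • G z)
      = I * ∫ θ in (0:ℝ)..(2*Real.pi), G (circleMap w s θ) := by
    rw [circleIntegral, ← intervalIntegral.integral_const_mul]
    refine intervalIntegral.integral_congr fun θ _ => ?_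
    have hne : circleMap 0 s θ ≠ 0 := by
      intro h
      have h2 := norm_circleMap_zero s θ
      rw [h, norm_zero, abs_of_pos hs] at h2
      exact hs.ne' h2.symm
    simp only [deriv_circleMap, circleMap_sub_center, smul_eq_mul]
    field_simp
  have h2 : (∫ θ in (0:ℝ)..(2*Real.pi), G (circleMap w s θ)) = 2 * Real.pi * G w := by
    rw [h1, smul_eq_mul] at key
    exact mul_left_cancel₀ I_ne_zero (by rw [key]; ring)
  have h3 : 2 * Real.pi * ‖G w‖
      ≤ ∫ θ in (0:ℝ)..(2*Real.pi), ‖G (circleMap w s θ)‖ := by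
    have := intervalIntegral.norm_integral_le_integral_norm
      (f := fun θ => G (circleMap w s θ)) (μ := volume) (by positivity : (0:ℝ) ≤ 2*Real.pi)
    rw [h2] at this
    simpa [_root_.abs_of_nonneg Real.pi_pos.le, mul_assoc] using this
  have h4 : (∫ θ in (0:ℝ)..(2*Real.pi), ‖G (circleMap w s θ)‖)
      = ∫ θ in (-Real.pi)..Real.pi, ‖G (circleMap w s θ)‖ := by
    have hper : Function.Periodic (fun θ => ‖G (circleMap w s θ)‖) (2*Real.pi) :=
      (periodic_circleMap w s).comp fun z => ‖G z‖
    have := hper.intervalIntegral_add_eq 0 (-Real.pi)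
    simpa [two_mul, add_assoc] using this
  linarith


/-- Ring step: lower bound for the inner angular lintegral. -/
lemma ring_step (G : ℂ → ℂ) (hG : Differentiable ℂ G) (w : ℂ) {s : ℝ}
    (hs : 0 < s) (hs1 : s ≤ 1) :
    ENNReal.ofReal (2 * Real.pi * ‖G w‖ * Real.exp (-(‖w‖ + 1)^2)) ≤
      ∫⁻ θ in Ioo (-Real.pi) Real.pi,
        ENNReal.ofReal (‖G (circleMap w s θ)‖ *
          Real.exp (-(‖circleMap w s θ‖)^2)) := by
  set h : ℝ → ℝ := fun θ => ‖G (circleMap w s θ)‖ *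
      Real.exp (-(‖circleMap w s θ‖)^2) with hh
  have hcontc : Continuous fun θ => circleMap w s θ := continuous_circleMap w s
  have habsG : Continuous fun θ => ‖G (circleMap w s θ)‖ :=
    continuous_norm.comp (hG.continuous.comp hcontc)
  have hcont : Continuous h :=
    habsG.mul ((Real.continuous_exp.comp
      ((continuous_norm.comp hcontc).pow 2).neg))
  have hnonneg : ∀ θ, 0 ≤ h θ := fun θ => by positivity
  -- pointwise bound
  have hpt : ∀ θ ∈ Set.Icc (-Real.pi) Real.pi,
      ‖G (circleMap w s θ)‖ * Real.exp (-(‖w‖ + 1)^2) ≤ h θ := by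
    intro θ _
    have habs : ‖circleMap w s θ‖ ≤ ‖w‖ + 1 := by
      calc ‖circleMap w s θ‖ ≤ ‖w‖ + ‖circleMap 0 s θ‖ := by
            rw [show circleMap w s θ = w + circleMap 0 s θ by simp [circleMap]]
            exact norm_add_le _ _
        _ ≤ ‖w‖ + 1 := by
            rw [norm_circleMap_zero, _root_.abs_of_pos hs]; linarith
    have : Real.exp (-(‖w‖ + 1)^2) ≤ Real.exp (-(‖circleMap w s θ‖)^2) := by
      apply Real.exp_le_exp.2
      have h0 : (0:ℝ) ≤ ‖circleMap w s θ‖ := (norm_nonneg _)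
      nlinarith
    exact mul_le_mul_of_nonneg_left this (norm_nonneg _)
  -- interval integral bound
  have hbound : 2 * Real.pi * ‖G w‖ * Real.exp (-(‖w‖ + 1)^2) ≤
      ∫ θ in (-Real.pi)..Real.pi, h θ := by
    have h1 := circ_mvp G hG w hs
    have h2 : (∫ θ in (-Real.pi)..Real.pi, ‖G (circleMap w s θ)‖) *
        Real.exp (-(‖w‖ + 1)^2) ≤ ∫ θ in (-Real.pi)..Real.pi, h θ := by
      rw [← intervalIntegral.integral_mul_const]
      apply intervalIntegral.integral_mono_on (by linarith [Real.pi_pos])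
      · exact (habsG.mul continuous_const).intervalIntegrable _ _
      · exact hcont.intervalIntegrable _ _
      · exact hpt
    calc 2 * Real.pi * ‖G w‖ * Real.exp (-(‖w‖ + 1)^2)
        ≤ (∫ θ in (-Real.pi)..Real.pi, ‖G (circleMap w s θ)‖) *
            Real.exp (-(‖w‖ + 1)^2) :=
          mul_le_mul_of_nonneg_right h1 (Real.exp_nonneg _)
      _ ≤ _ := h2
  -- convert to lintegral
  have heq : (∫ θ in (-Real.pi)..Real.pi, h θ) = ∫ θ in Ioc (-Real.pi) Real.pi, h θ :=
    intervalIntegral.integral_of_le (by linarith [Real.pi_pos])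
  have hIoo : (∫⁻ θ in Ioo (-Real.pi) Real.pi, ENNReal.ofReal (h θ)) =
      ∫⁻ θ in Ioc (-Real.pi) Real.pi, ENNReal.ofReal (h θ) := by
    rw [Measure.restrict_congr_set Ioo_ae_eq_Ioc]
  rw [hIoo, ← ofReal_integral_eq_lintegral_ofReal hcont.integrableOn_Ioc
      (Filter.Eventually.of_forall fun θ => hnonneg θ)]
  exact ENNReal.ofReal_le_ofReal (by rw [← heq]; exact hbound)


lemma key_bound (G : ℂ → ℂ) (hG : Differentiable ℂ G) (w : ℂ) :
    ENNReal.ofReal (Real.pi * ‖G w‖ * Real.exp (-(‖w‖ + 1)^2)) ≤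
      ∫⁻ z : ℂ, ENNReal.ofReal (‖G z‖ * Real.exp (-(‖z‖)^2)) := by
  set u : ℂ → ℝ := fun z => ‖G z‖ * Real.exp (-(‖z‖)^2) with hu
  have hucont : Continuous u :=
    (continuous_norm.comp hG.continuous).mul
      (Real.continuous_exp.comp (continuous_norm.pow 2).neg)
  set c : ℝ × ℝ → ℂ := fun q => q.1 + q.2 * I with hc
  have hccont : Continuous c := by continuity
  set g : ℝ × ℝ → ENNReal := fun q => ENNReal.ofReal (u (c q)) with hg
  have hgmeas : Measurable g := ENNReal.measurable_ofReal.comp (hucont.comp hccont).measurable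
  -- step A : RHS as an integral on ℝ × ℝ
  have stepA : (∫⁻ z : ℂ, ENNReal.ofReal (u z)) = ∫⁻ q : ℝ × ℝ, g q := by
    rw [← (Complex.volume_preserving_equiv_real_prod.symm _).map_eq,
      MeasureTheory.lintegral_map_equiv]
    refine lintegral_congr fun q => ?_
    congr 1
    simp [hc, Complex.measurableEquivRealProd, Complex.equivRealProdCLM_symm_apply]
  -- the transformation
  set T : ℝ × ℝ → ℝ × ℝ := fun p => (w.re, w.im) + polarCoord.symm p with hT
  set S : Set (ℝ × ℝ) := Ioo (0:ℝ) 1 ×ˢ Ioo (-Real.pi) Real.pi with hS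
  have hSmeas : MeasurableSet S := (isOpen_Ioo.prod isOpen_Ioo).measurableSet
  have hSsub : S ⊆ polarCoord.target := by
    rintro ⟨s, θ⟩ ⟨h1, h2⟩
    exact ⟨h1.1, h2⟩
  set B : ℝ × ℝ → ℝ × ℝ →L[ℝ] ℝ × ℝ := fun p =>
    LinearMap.toContinuousLinearMap (Matrix.toLin (Module.Basis.finTwoProd ℝ) (Module.Basis.finTwoProd ℝ)
      !![Real.cos p.2, -p.1 * Real.sin p.2; Real.sin p.2, p.1 * Real.cos p.2]) with hB
  have hderiv : ∀ p ∈ S, HasFDerivWithinAt T (B p) S p := fun p _ =>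
    ((hasFDerivAt_polarCoord_symm p).const_add ((w.re, w.im) : ℝ × ℝ)).hasFDerivWithinAt
  have hBdet : ∀ p ∈ S, ENNReal.ofReal |(B p).det| = ENNReal.ofReal p.1 := by
    rintro ⟨s, θ⟩ hp
    have : (B (s, θ)).det = s := by
      conv_rhs => rw [← one_mul s, ← Real.cos_sq_add_sin_sq θ]
      simp only [hB, neg_mul, LinearMap.det_toContinuousLinearMap, LinearMap.det_toLin,
        Matrix.det_fin_two_of, sub_neg_eq_add]
      ring
    rw [this, _root_.abs_of_pos hp.1.1]
  have hinj : Set.InjOn T S := by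
    have h1 : Set.InjOn polarCoord.symm S :=
      polarCoord.symm.injOn.mono (by rwa [OpenPartialHomeomorph.symm_source])
    exact (add_right_injective ((w.re, w.im) : ℝ × ℝ)).injOn.comp h1 (Set.mapsTo_univ _ _)
  -- step B : change of variables
  have stepB : (∫⁻ p in S, ENNReal.ofReal p.1 * g (T p)) ≤ ∫⁻ q : ℝ × ℝ, g q := by
    calc (∫⁻ p in S, ENNReal.ofReal p.1 * g (T p))
        = ∫⁻ p in S, ENNReal.ofReal |(B p).det| * g (T p) := by
          refine setLIntegral_congr_fun hSmeas (fun p hp => ?_)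
          rw [hBdet p hp]
      _ = ∫⁻ x in T '' S, g x :=
          (lintegral_image_eq_lintegral_abs_det_fderiv_mul volume hSmeas hderiv hinj g).symm
      _ ≤ ∫⁻ q : ℝ × ℝ, g q := setLIntegral_le_lintegral _ _
  -- coordinate identity
  have hcoord : ∀ s θ : ℝ, c (T (s, θ)) = circleMap w s θ := by
    intro s θ
    simp only [hc, hT, circleMap, Complex.exp_mul_I, polarCoord_symm_apply]
    apply Complex.ext <;> simp <;> ring
  -- step C : Fubini
  have hTcont : Continuous T := by
    have hTeq : T = fun p : ℝ × ℝ =>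
        ((w.re + p.1 * Real.cos p.2, w.im + p.1 * Real.sin p.2) : ℝ × ℝ) := by
      funext p
      simp [hT, polarCoord_symm_apply, Prod.ext_iff]
    rw [hTeq]; fun_prop
  have hmeas2 : Measurable fun p : ℝ × ℝ => ENNReal.ofReal p.1 * g (T p) :=
    (ENNReal.measurable_ofReal.comp measurable_fst).mul (hgmeas.comp hTcont.measurable)
  have stepC : (∫⁻ p in S, ENNReal.ofReal p.1 * g (T p))
      = ∫⁻ s in Ioo (0:ℝ) 1, ∫⁻ θ in Ioo (-Real.pi) Real.pi,
          ENNReal.ofReal s * g (T (s, θ)) := by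
    rw [hS, Measure.volume_eq_prod, ← Measure.prod_restrict]
    exact lintegral_prod _ hmeas2.aemeasurable
  set C : ENNReal :=
    ENNReal.ofReal (2 * Real.pi * ‖G w‖ * Real.exp (-(‖w‖ + 1)^2)) with hC
  -- inner bound
  have inner : ∀ s ∈ Ioo (0:ℝ) 1,
      ENNReal.ofReal s * C ≤ ∫⁻ θ in Ioo (-Real.pi) Real.pi,
        ENNReal.ofReal s * g (T (s, θ)) := by
    intro s hsmem
    have hmg : Measurable fun θ : ℝ => g (T (s, θ)) :=
      (hgmeas.comp hTcont.measurable).comp (measurable_const.prodMk measurable_id)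
    rw [lintegral_const_mul _ hmg]
    refine mul_le_mul_right ?_ _
    have : (∫⁻ θ in Ioo (-Real.pi) Real.pi, g (T (s, θ)))
        = ∫⁻ θ in Ioo (-Real.pi) Real.pi,
            ENNReal.ofReal (‖G (circleMap w s θ)‖ *
              Real.exp (-(‖circleMap w s θ‖)^2)) := by
      refine lintegral_congr fun θ => ?_
      rw [hg]
      simp only [hcoord s θ, hu]
    rw [this]
    exact ring_step G hG w hsmem.1 hsmem.2.le
  -- outer bound
  have hhalf : (∫⁻ s in Ioo (0:ℝ) 1, ENNReal.ofReal s) = ENNReal.ofReal (1/2) := by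
    have hint : IntegrableOn (fun x : ℝ => x) (Ioo (0:ℝ) 1) :=
      ((continuous_id (X := ℝ)).integrableOn_Ioc (a := 0) (b := 1)).mono_set
        Ioo_subset_Ioc_self
    rw [← ofReal_integral_eq_lintegral_ofReal hint
        ((ae_restrict_iff' measurableSet_Ioo).2 (ae_of_all _ fun x hx => hx.1.le))]
    congr 1
    rw [← MeasureTheory.integral_Ioc_eq_integral_Ioo, ← intervalIntegral.integral_of_le zero_le_one]
    simp [integral_id]
  have outer : ENNReal.ofReal (Real.pi * ‖G w‖ *
        Real.exp (-(‖w‖ + 1)^2)) ≤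
      ∫⁻ s in Ioo (0:ℝ) 1, ∫⁻ θ in Ioo (-Real.pi) Real.pi,
        ENNReal.ofReal s * g (T (s, θ)) := by
    have h1 : ENNReal.ofReal (Real.pi * ‖G w‖ *
        Real.exp (-(‖w‖ + 1)^2)) = ENNReal.ofReal (1/2) * C := by
      rw [hC, ← ENNReal.ofReal_mul (by norm_num)]
      congr 1
      ring
    have h2 : (∫⁻ s in Ioo (0:ℝ) 1, ENNReal.ofReal s * C)
        = ENNReal.ofReal (1/2) * C := by
      rw [lintegral_mul_const _ ENNReal.measurable_ofReal, hhalf]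
    rw [h1, ← h2]
    refine setLIntegral_mono (Measurable.lintegral_prod_right hmeas2) inner
  calc ENNReal.ofReal (Real.pi * ‖G w‖ * Real.exp (-(‖w‖ + 1)^2))
      ≤ ∫⁻ s in Ioo (0:ℝ) 1, ∫⁻ θ in Ioo (-Real.pi) Real.pi,
          ENNReal.ofReal s * g (T (s, θ)) := outer
    _ = ∫⁻ p in S, ENNReal.ofReal p.1 * g (T p) := stepC.symm
    _ ≤ ∫⁻ q : ℝ × ℝ, g q := stepB
    _ = ∫⁻ z : ℂ, ENNReal.ofReal (u z) := stepA.symm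


lemma tendsto_eval (H : ℕ → ℂ → ℂ) (hH : ∀ n, Differentiable ℂ (H n))
    (hconv : Tendsto (fun n => ∫⁻ z : ℂ, ENNReal.ofReal
      ((‖H n z‖) ^ 2 * Real.exp (-(‖z‖) ^ 2))) atTop (nhds 0))
    (w : ℂ) : Tendsto (fun n => H n w) atTop (nhds 0) := by
  have hb : ∀ n, ENNReal.ofReal (Real.pi * (‖H n w‖) ^ 2 *
      Real.exp (-(‖w‖ + 1) ^ 2)) ≤ ∫⁻ z : ℂ, ENNReal.ofReal
      ((‖H n z‖) ^ 2 * Real.exp (-(‖z‖) ^ 2)) := by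
    intro n
    have := key_bound (fun z => (H n z) ^ 2) ((hH n).pow 2) w
    simpa [map_pow] using this
  have h0 : Tendsto (fun n => ENNReal.ofReal (Real.pi * (‖H n w‖) ^ 2 *
      Real.exp (-(‖w‖ + 1) ^ 2))) atTop (nhds 0) :=
    tendsto_of_tendsto_of_tendsto_of_le_of_le tendsto_const_nhds hconv
      (fun n => zero_le) hb
  have h1 : Tendsto (fun n => Real.pi * (‖H n w‖) ^ 2 *
      Real.exp (-(‖w‖ + 1) ^ 2)) atTop (nhds 0) := by
    have h2 := (ENNReal.tendsto_toReal (by simp)).comp h0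
    have h3 : (fun n => ENNReal.toReal (ENNReal.ofReal (Real.pi * (‖H n w‖) ^ 2 *
        Real.exp (-(‖w‖ + 1) ^ 2)))) = fun n => Real.pi * (‖H n w‖) ^ 2 *
        Real.exp (-(‖w‖ + 1) ^ 2) :=
      funext fun n => ENNReal.toReal_ofReal (by positivity)
    rw [Function.comp_def, h3] at h2
    simpa using h2
  have hc : (0:ℝ) < Real.pi * Real.exp (-(‖w‖ + 1) ^ 2) := by positivity
  have h3 : Tendsto (fun n => (‖H n w‖) ^ 2) atTop (nhds 0) := by
    have h4 := h1.const_mul ((Real.pi * Real.exp (-(‖w‖ + 1) ^ 2))⁻¹)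
    have h5 : (fun n => (Real.pi * Real.exp (-(‖w‖ + 1) ^ 2))⁻¹ *
        (Real.pi * (‖H n w‖) ^ 2 * Real.exp (-(‖w‖ + 1) ^ 2)))
        = fun n => (‖H n w‖) ^ 2 := by
      funext n
      field_simp
    rw [h5] at h4
    simpa using h4
  have h6 : Tendsto (fun n => ‖H n w‖) atTop (nhds 0) := by
    have h7 := (Real.continuous_sqrt.tendsto 0).comp h3
    have h8 : (fun n => Real.sqrt ((‖H n w‖) ^ 2))
        = fun n => ‖H n w‖ :=
      funext fun n => Real.sqrt_sq (norm_nonneg _)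
    rw [Function.comp_def, h8] at h7
    simpa using h7
  rw [tendsto_zero_iff_norm_tendsto_zero]
  simpa using h6

theorem maximal_wco_closed (ψ φ : ℂ → ℂ) (hψ : Differentiable ℂ ψ) (hφ : Differentiable ℂ φ)
    (F : ℕ → ℂ → ℂ) (hFdiff : ∀ n, Differentiable ℂ (F n))
    (hFmem : ∀ n, ∫⁻ z : ℂ, ENNReal.ofReal
        ((‖F n z‖) ^ 2 * Real.exp (-(‖z‖) ^ 2)) < ⊤)
    (hWFmem : ∀ n, ∫⁻ z : ℂ, ENNReal.ofReal
        ((‖ψ z * F n (φ z)‖) ^ 2 * Real.exp (-(‖z‖) ^ 2)) < ⊤)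
    (f g : ℂ → ℂ) (hf : Differentiable ℂ f) (hg : Differentiable ℂ g)
    (hfmem : ∫⁻ z : ℂ, ENNReal.ofReal
        ((‖f z‖) ^ 2 * Real.exp (-(‖z‖) ^ 2)) < ⊤)
    (hgmem : ∫⁻ z : ℂ, ENNReal.ofReal
        ((‖g z‖) ^ 2 * Real.exp (-(‖z‖) ^ 2)) < ⊤)
    (hconv1 : Tendsto (fun n => ∫⁻ z : ℂ, ENNReal.ofReal
        ((‖F n z - f z‖) ^ 2 * Real.exp (-(‖z‖) ^ 2))) atTop (nhds 0))
    (hconv2 : Tendsto (fun n => ∫⁻ z : ℂ, ENNReal.ofReal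
        ((‖ψ z * F n (φ z) - g z‖) ^ 2 * Real.exp (-(‖z‖) ^ 2)))
        atTop (nhds 0)) :
    (∀ z : ℂ, ψ z * f (φ z) = g z) ∧
      ∫⁻ z : ℂ, ENNReal.ofReal
        ((‖ψ z * f (φ z)‖) ^ 2 * Real.exp (-(‖z‖) ^ 2)) < ⊤ := by
  have key1 : ∀ z : ℂ, Tendsto (fun n => F n z) atTop (nhds (f z)) := by
    intro z
    have := tendsto_eval (fun n z => F n z - f z) (fun n => (hFdiff n).sub hf) hconv1 z
    rwa [tendsto_sub_nhds_zero_iff] at this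
  have key2 : ∀ z : ℂ, Tendsto (fun n => ψ z * F n (φ z)) atTop (nhds (g z)) := by
    intro z
    have := tendsto_eval (fun n z => ψ z * F n (φ z) - g z)
      (fun n => (hψ.mul ((hFdiff n).comp hφ)).sub hg) hconv2 z
    rwa [tendsto_sub_nhds_zero_iff] at this
  have heq : ∀ z : ℂ, ψ z * f (φ z) = g z := by
    intro z
    have hA : Tendsto (fun n => ψ z * F n (φ z)) atTop (nhds (ψ z * f (φ z))) :=
      tendsto_const_nhds.mul (key1 (φ z))
    exact tendsto_nhds_unique hA (key2 z)
  refine ⟨heq, ?_⟩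
  calc ∫⁻ z : ℂ, ENNReal.ofReal
        ((‖ψ z * f (φ z)‖) ^ 2 * Real.exp (-(‖z‖) ^ 2))
      = ∫⁻ z : ℂ, ENNReal.ofReal
        ((‖g z‖) ^ 2 * Real.exp (-(‖z‖) ^ 2)) :=
        lintegral_congr fun z => by rw [heq z]
    _ < ⊤ := hgmem
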